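/- Let G be a simple graph in which every vertex has degree at most 1. Then every walk in G of even length has palindromic support, i.e. w.support.reverse = w.support; in other words, every even-length walk whose steps are all edges of a graph of maximum degree 1 coincides with its own conjugate. (This is the key fact behind the isomorphism S^ℓ(G) ≅ L^ℓ(G) for mixed graphs of maximum undirected degree 1 and even ℓ.) -/

import Mathlib

/-- Alternating list `u :: a :: u :: a :: …` of length `n+1`. -/
def altList {V : Type*} : ℕ → V → V → List V
  | 0, u, _ => [u]
  | n + 1, u, a => u :: altList n a u

lemma altList_append_even {V : Type*} (u a : V) :
    ∀ n : ℕ, Even n → altList n u a ++ [a, u] = u :: a :: altList n u a := by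
  intro n
  induction n using Nat.strong_induction_on with
  | _ n ih =>
    match n with
    | 0 => intro _; rfl
    | 1 => intro h; exact absurd h (by decide)
    | n + 2 =>
      intro h
      have hn : Even n := by
        rcases h with ⟨k, hk⟩
        exact ⟨k - 1, by omega⟩
      have := ih n (by omega) hn
      simp only [altList, List.cons_append, this]

lemma altList_reverse_even {V : Type*} (u a : V) :
    ∀ n : ℕ, Even n → (altList n u a).reverse = altList n u a := by
  intro n
  induction n using Nat.strong_induction_on with
  | _ n ih =>
    match n with
    | 0 => intro _; rfl
    | 1 => intro h; exact absurd h (by decide)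
    | n + 2 =>
      intro h
      have hn : Even n := by
        rcases h with ⟨k, hk⟩
        exact ⟨k - 1, by omega⟩
      have hrev := ih n (by omega) hn
      show (u :: a :: altList n u a).reverse = u :: a :: altList n u a
      rw [List.reverse_cons, List.reverse_cons, hrev, List.append_assoc]
      simpa using altList_append_even u a n hn

lemma neighbor_unique {V : Type*} [Fintype V] [DecidableEq V]
    (G : SimpleGraph V) [DecidableRel G.Adj] (hdeg : ∀ v : V, G.degree v ≤ 1)
    {u a b : V} (ha : G.Adj u a) (hb : G.Adj u b) : a = b := by
  by_contra hne
  have h2 : 2 ≤ G.degree u := by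
    have : ({a, b} : Finset V) ⊆ G.neighborFinset u := by
      intro x hx
      simp only [Finset.mem_insert, Finset.mem_singleton] at hx
      rcases hx with rfl | rfl <;> simp [SimpleGraph.mem_neighborFinset, ha, hb]
    calc 2 = ({a, b} : Finset V).card := (Finset.card_pair hne).symm
      _ ≤ (G.neighborFinset u).card := Finset.card_le_card this
      _ = G.degree u := rfl
  have := hdeg u
  omega
  
lemma walk_support_alt {V : Type*} [Fintype V] [DecidableEq V]
    (G : SimpleGraph V) [DecidableRel G.Adj] (hdeg : ∀ v : V, G.degree v ≤ 1) :
    ∀ {u v : V} (w : G.Walk u v), w.support = [u] ∨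
      ∃ a, G.Adj u a ∧ w.support = altList w.length u a := by
  intro u v w
  induction w with
  | nil => left; rfl
  | @cons u a v h p ih =>
    right
    refine ⟨a, h, ?_⟩
    rcases ih with hp | ⟨b, hb, hp⟩
    · have : p.length = 0 := by
        have := congrArg List.length hp
        simpa [SimpleGraph.Walk.length_support] using this
      simp [SimpleGraph.Walk.support_cons, hp, this, altList]
    · have hbu : b = u := neighbor_unique G hdeg hb h.symm
      subst hbu
      cases hn : p.length with
      | zero => simp [hn] at hp; simp [SimpleGraph.Walk.support_cons, hp, hn, altList]
      | succ m =>
        rw [hn] at hp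
        simp [SimpleGraph.Walk.support_cons, hp, hn, altList]

/-- In a simple graph of maximum degree at most `1`, every walk of even length has
palindromic support, i.e. coincides with its own conjugate. -/
theorem walk_palindromic_of_max_degree_le_one {V : Type*} [Fintype V] [DecidableEq V]
    (G : SimpleGraph V) [DecidableRel G.Adj] (hdeg : ∀ v : V, G.degree v ≤ 1)
    {u v : V} (w : G.Walk u v) (h : Even w.length) :
    w.support.reverse = w.support := by
  rcases walk_support_alt G hdeg w with hs | ⟨a, _, hs⟩
  · rw [hs]; rfl
  · rw [hs]; exact altList_reverse_even u a w.length h
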